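/- If A is invertible and AΓA⁻¹ ⊆ Γ for a splitting crystal group Γ, then Q̃_{[s,t]}(AγA⁻¹) = A_{[s]} Q̃_{[s,t]}(γ) A_{[t]}^{−1} for every γ ∈ Γ. -/

import Mathlib

open scoped BigOperators
open Finset MeasureTheory

noncomputable section

/-- The vector `X_[s](x)` of all degree-`s` monomials of `x ∈ ℂ^d`, indexed by
multisets of size `s` over `Fin d` (i.e. `Sym (Fin d) s`). -/
def Xvec (d s : ℕ) (x : Fin d → ℂ) : Sym (Fin d) s → ℂ :=
  fun m => (Multiset.map x (m : Multiset (Fin d))).prod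

/-- `X_[s]` applied to a real vector. -/
def XvecR (d s : ℕ) (x : Fin d → ℝ) : Sym (Fin d) s → ℂ :=
  Xvec d s fun i => (x i : ℂ)

/-- `Mt` is the matrix `M_[t]` induced by `M` on degree-`t` monomials, i.e.
`X_[t](Mx) = M_[t] X_[t](x)` for all `x`. -/
def IsMonMat (d t : ℕ) (M : Matrix (Fin d) (Fin d) ℝ)
    (Mt : Matrix (Sym (Fin d) t) (Sym (Fin d) t) ℂ) : Prop :=
  ∀ x : Fin d → ℝ, XvecR d t (M.mulVec x) = Mt.mulVec (XvecR d t x)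

/-- `Q` is the family of matrices `Q_[s,t](y)` defined by the expansion
`X_[s](x - y) = ∑_{t=0}^{s} Q_[s,t](y) X_[t](x)`. -/
def IsQfam (d : ℕ)
    (Q : (s : ℕ) → (t : ℕ) → (Fin d → ℝ) → Matrix (Sym (Fin d) s) (Sym (Fin d) t) ℂ) : Prop :=
  ∀ (s : ℕ) (y x : Fin d → ℝ),
    XvecR d s (x - y) = ∑ t ∈ Finset.range (s + 1), (Q s t y).mulVec (XvecR d t x)

/-- A complex square matrix is expansive if all of its eigenvalues (roots of the
characteristic polynomial) have modulus strictly greater than `1`. -/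
def ExpansiveC {n : Type*} [Fintype n] [DecidableEq n] (M : Matrix n n ℂ) : Prop :=
  ∀ μ : ℂ, M.charpoly.IsRoot μ → 1 < ‖μ‖

/-- A real square matrix is expansive if all of its complex eigenvalues have
modulus strictly greater than `1`. -/
def ExpansiveR {n : Type*} [Fintype n] [DecidableEq n] (M : Matrix n n ℝ) : Prop :=
  ExpansiveC (M.map (algebraMap ℝ ℂ))

/-- Elements of a splitting crystal group `Γ = G ⋉ Λ`, written as pairs
`γ = (b, l)` with `b` a matrix (the point part) and `l` a vector. -/
abbrev CrystElem (d : ℕ) := Matrix (Fin d) (Fin d) ℝ × (Fin d → ℝ)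

/-- The action `γ(x) = b(x + l)` of `γ = (b, l)`. -/
def crystAct {d : ℕ} (γ : CrystElem d) (x : Fin d → ℝ) : Fin d → ℝ :=
  γ.1.mulVec (x + γ.2)

/-- The product `(b₂,l₂)·(b₁,l₁) = (b₂b₁, l₁ + b₁⁻¹ l₂)` (composition of the actions). -/
def crystMul {d : ℕ} (γ₂ γ₁ : CrystElem d) : CrystElem d :=
  (γ₂.1 * γ₁.1, γ₁.2 + (γ₁.1)⁻¹.mulVec γ₂.2)

/-- The inverse `(b,l)⁻¹ = (b⁻¹, -b l)`. -/
def crystInv {d : ℕ} (γ : CrystElem d) : CrystElem d :=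
  ((γ.1)⁻¹, -(γ.1.mulVec γ.2))

/-- Conjugation by an invertible matrix `A`:
`A (b,l) A⁻¹ = (A b A⁻¹, (A b A⁻¹)⁻¹ (A b l))`. -/
def crystConj {d : ℕ} (A : Matrix (Fin d) (Fin d) ℝ) (γ : CrystElem d) : CrystElem d :=
  (A * γ.1 * A⁻¹, (A * γ.1 * A⁻¹)⁻¹.mulVec ((A * γ.1).mulVec γ.2))

/-- `(G, Λ)` are the data of a splitting crystal group `Γ = G ⋉ Λ`: `G` is a
finite group of orthogonal matrices and `Λ` is a full-rank lattice preserved by `G`. -/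
def IsSplittingCrystal (d : ℕ) (G : Finset (Matrix (Fin d) (Fin d) ℝ))
    (Λ : Set (Fin d → ℝ)) : Prop :=
  (1 : Matrix (Fin d) (Fin d) ℝ) ∈ G ∧
  (∀ b ∈ G, ∀ b' ∈ G, b * b' ∈ G) ∧
  (∀ b ∈ G, b⁻¹ ∈ G) ∧
  (∀ b ∈ G, b * b.transpose = 1) ∧
  (∃ R : Matrix (Fin d) (Fin d) ℝ, IsUnit R.det ∧
      Λ = {v | ∃ k : Fin d → ℤ, v = R.mulVec fun i => (k i : ℝ)}) ∧
  (∀ b ∈ G, ∀ l ∈ Λ, b.mulVec l ∈ Λ)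

/-- The underlying set of `Γ = G ⋉ Λ`. -/
def crystSet {d : ℕ} (G : Finset (Matrix (Fin d) (Fin d) ℝ)) (Λ : Set (Fin d → ℝ)) :
    Set (CrystElem d) := {γ | γ.1 ∈ G ∧ γ.2 ∈ Λ}

/-- `A` is a `Γ`-admissible matrix: expansive and `AΓA⁻¹ ⊆ Γ`. -/
def IsAdmissible {d : ℕ} (G : Finset (Matrix (Fin d) (Fin d) ℝ)) (Λ : Set (Fin d → ℝ))
    (A : Matrix (Fin d) (Fin d) ℝ) : Prop :=
  ExpansiveR A ∧ ∀ γ ∈ crystSet G Λ, crystConj A γ ∈ crystSet G Λ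

-- XvecR as cast of real product
lemma XvecR_eq (d t : ℕ) (x : Fin d → ℝ) (m : Sym (Fin d) t) :
    XvecR d t x m = ((Multiset.map x (m : Multiset (Fin d))).prod : ℝ) := by
  simp only [XvecR, Xvec]
  rw [← Complex.ofRealHom_eq_coe, map_multiset_prod (Complex.ofRealHom), Multiset.map_map]
  rfl

-- core: coefficients vanish
lemma coeff_zero (d t : ℕ) (c : Sym (Fin d) t → ℂ)
    (h : ∀ x : Fin d → ℝ, ∑ m : Sym (Fin d) t, c m * XvecR d t x m = 0) :
    c = 0 := by
  have key : ∀ r : Sym (Fin d) t → ℝ,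
      (∀ x : Fin d → ℝ, ∑ m : Sym (Fin d) t, r m * (Multiset.map x (m : Multiset (Fin d))).prod = 0)
      → r = 0 := by
    intro r hr
    set P : MvPolynomial (Fin d) ℝ :=
      ∑ m : Sym (Fin d) t, MvPolynomial.monomial (Multiset.toFinsupp (m : Multiset (Fin d))) (r m)
      with hP
    have heval : ∀ x : Fin d → ℝ, MvPolynomial.eval x P = 0 := by
      intro x
      rw [hP, map_sum]
      rw [← hr x]
      refine Finset.sum_congr rfl fun m _ => ?_
      rw [MvPolynomial.eval_monomial]
      congr 1
      rw [Finsupp.prod]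
      rw [Finset.prod_multiset_map_count]
      rfl
    have hP0 : P = 0 := by
      apply MvPolynomial.funext
      intro x; rw [heval x]; simp
    funext m0
    have hc : MvPolynomial.coeff (Multiset.toFinsupp (m0 : Multiset (Fin d))) P = r m0 := by
      rw [hP, MvPolynomial.coeff_sum]
      rw [Finset.sum_eq_single m0]
      · simp [MvPolynomial.coeff_monomial]
      · intro m _ hm
        rw [MvPolynomial.coeff_monomial, if_neg]
        intro hEq
        exact hm (Sym.coe_injective (Multiset.toFinsupp.injective hEq))
      · simp
    rw [hP0] at hc
    simpa using hc.symm
  have hre := key (fun m => (c m).re) (by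
    intro x
    have h2 := congrArg Complex.re (h x)
    simp only [Complex.re_sum, Complex.zero_re] at h2
    rw [← h2]
    refine Finset.sum_congr rfl fun m _ => ?_
    rw [XvecR_eq]
    simp [Complex.mul_re])
  have him := key (fun m => (c m).im) (by
    intro x
    have h2 := congrArg Complex.im (h x)
    simp only [Complex.im_sum, Complex.zero_im] at h2
    rw [← h2]
    refine Finset.sum_congr rfl fun m _ => ?_
    rw [XvecR_eq]
    simp [Complex.mul_im])
  funext m
  exact Complex.ext (congrFun hre m) (congrFun him m)

-- spanning consequence: matrix killing all XvecR is zero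
lemma matrix_eq_zero_of_mulVec_XvecR {n : Type*} [Fintype n] (d t : ℕ)
    (M : Matrix n (Sym (Fin d) t) ℂ)
    (h : ∀ x : Fin d → ℝ, M.mulVec (XvecR d t x) = 0) : M = 0 := by
  ext p m
  have hrow : (fun m => M p m) = 0 := by
    apply coeff_zero d t
    intro x
    have := congrFun (h x) p
    simpa [Matrix.mulVec, dotProduct] using this
  exact congrFun hrow m

lemma matrix_eq_of_mulVec_XvecR {n : Type*} [Fintype n] (d t : ℕ)
    (M N : Matrix n (Sym (Fin d) t) ℂ)
    (h : ∀ x : Fin d → ℝ, M.mulVec (XvecR d t x) = N.mulVec (XvecR d t x)) : M = N := by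
  have := matrix_eq_zero_of_mulVec_XvecR d t (M - N) (fun x => by
    rw [Matrix.sub_mulVec, h x, sub_self])
  exact sub_eq_zero.mp this

lemma monmat_unique {d t : ℕ} {M : Matrix (Fin d) (Fin d) ℝ}
    {Mt Mt' : Matrix (Sym (Fin d) t) (Sym (Fin d) t) ℂ}
    (h : IsMonMat d t M Mt) (h' : IsMonMat d t M Mt') : Mt = Mt' :=
  matrix_eq_of_mulVec_XvecR d t Mt Mt' (fun x => by rw [← h x, ← h' x])

lemma monmat_mul {d t : ℕ} {M N : Matrix (Fin d) (Fin d) ℝ}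
    {Mt Nt : Matrix (Sym (Fin d) t) (Sym (Fin d) t) ℂ}
    (hM : IsMonMat d t M Mt) (hN : IsMonMat d t N Nt) :
    IsMonMat d t (M * N) (Mt * Nt) := by
  intro x
  rw [← Matrix.mulVec_mulVec, ← Matrix.mulVec_mulVec, ← hN x, ← hM (N.mulVec x)]

lemma monmat_isUnit {d t : ℕ} {M : Matrix (Fin d) (Fin d) ℝ}
    {Mt : Matrix (Sym (Fin d) t) (Sym (Fin d) t) ℂ}
    (hM : IsMonMat d t M Mt) (hM' : IsUnit M.det) : IsUnit Mt.det := by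
  rw [isUnit_iff_ne_zero, Ne, ← Matrix.det_transpose, ← Matrix.exists_mulVec_eq_zero_iff]
  rintro ⟨v, hv, hv0⟩
  apply hv
  have hvm : ∀ w, dotProduct v (Mt.mulVec w) = 0 := by
    intro w
    rw [Matrix.dotProduct_mulVec, ← Matrix.mulVec_transpose, hv0]
    simp [dotProduct]
  apply coeff_zero d t
  intro y
  have hy : y = M.mulVec (M⁻¹.mulVec y) := by
    rw [Matrix.mulVec_mulVec, Matrix.mul_nonsing_inv _ hM', Matrix.one_mulVec]
  calc ∑ m : Sym (Fin d) t, v m * XvecR d t y m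
      = dotProduct v (XvecR d t y) := rfl
    _ = dotProduct v (Mt.mulVec (XvecR d t (M⁻¹.mulVec y))) := by
        rw [← hM (M⁻¹.mulVec y), ← hy]
    _ = 0 := hvm _

lemma XvecR_smul (d t : ℕ) (c : ℝ) (x : Fin d → ℝ) :
    XvecR d t (c • x) = ((c : ℂ) ^ t) • XvecR d t x := by
  funext m
  simp only [XvecR, Xvec, Pi.smul_apply, smul_eq_mul]
  have : (fun i => ((c * x i : ℝ) : ℂ)) = fun i => (c : ℂ) * ((x i : ℝ) : ℂ) := by
    funext i; push_cast; ring
  rw [this]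
  rw [Multiset.prod_map_mul]
  congr 1
  rw [Multiset.map_const', Multiset.prod_replicate]
  congr 1
  exact m.2

lemma Q_conj (d s : ℕ)
    (Q : (s : ℕ) → (t : ℕ) → (Fin d → ℝ) → Matrix (Sym (Fin d) s) (Sym (Fin d) t) ℂ)
    (hQ : IsQfam d Q)
    (A : Matrix (Fin d) (Fin d) ℝ) (hA : IsUnit A.det)
    (Am : (u : ℕ) → Matrix (Sym (Fin d) u) (Sym (Fin d) u) ℂ)
    (hAm : ∀ u, IsMonMat d u A (Am u)) (l : Fin d → ℝ) :
    ∀ t' ∈ Finset.range (s + 1),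
      Q s t' (A.mulVec l) * Am t' = Am s * Q s t' l := by
  set D : (u : ℕ) → Matrix (Sym (Fin d) s) (Sym (Fin d) u) ℂ :=
    fun u => Q s u (A.mulVec l) * Am u - Am s * Q s u l with hD
  have key : ∀ x : Fin d → ℝ,
      ∑ u ∈ Finset.range (s + 1), (D u).mulVec (XvecR d u x) = 0 := by
    intro x
    have h1 := hQ s (A.mulVec l) (A.mulVec x)
    have h2 := hQ s l x
    have hsub : A.mulVec x - A.mulVec l = A.mulVec (x - l) := (Matrix.mulVec_sub A x l).symm
    rw [hsub, hAm s (x - l), h2] at h1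
    have hAsum : (Am s).mulVec (∑ u ∈ Finset.range (s + 1), (Q s u l).mulVec (XvecR d u x))
        = ∑ u ∈ Finset.range (s + 1), (Am s * Q s u l).mulVec (XvecR d u x) := by
      have hms := map_sum ((Am s).mulVecLin)
        (fun u => (Q s u l).mulVec (XvecR d u x)) (Finset.range (s + 1))
      simp only [Matrix.mulVecLin_apply] at hms
      rw [hms]
      refine Finset.sum_congr rfl fun u _ => ?_
      rw [Matrix.mulVec_mulVec]
    rw [hAsum] at h1
    have h3 : ∀ u, (Q s u (A.mulVec l)).mulVec (XvecR d u (A.mulVec x))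
        = (Q s u (A.mulVec l) * Am u).mulVec (XvecR d u x) := by
      intro u
      rw [hAm u x, Matrix.mulVec_mulVec]
    simp only [h3] at h1
    simp only [hD, Matrix.sub_mulVec]
    rw [Finset.sum_sub_distrib, ← h1, sub_self]
  intro t' ht'
  have hz : D t' = 0 := by
    apply matrix_eq_zero_of_mulVec_XvecR d t'
    intro x
    funext p
    -- polynomial in c
    set a : ℕ → ℂ := fun u => ((D u).mulVec (XvecR d u x)) p with ha
    have hc : ∀ c : ℝ, ∑ u ∈ Finset.range (s + 1), (c : ℂ) ^ u * a u = 0 := by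
      intro c
      have := congrFun (key (c • x)) p
      simp only [Finset.sum_apply, Pi.zero_apply] at this
      rw [← this]
      refine Finset.sum_congr rfl fun u _ => ?_
      rw [XvecR_smul, Matrix.mulVec_smul]
      simp [ha, smul_eq_mul]
    set P : Polynomial ℂ :=
      ∑ u ∈ Finset.range (s + 1), Polynomial.C (a u) * Polynomial.X ^ u with hPdef
    have hProots : ∀ c : ℝ, P.IsRoot (c : ℂ) := by
      intro c
      simp only [hPdef, Polynomial.IsRoot, Polynomial.eval_finset_sum, Polynomial.eval_mul,
        Polynomial.eval_C, Polynomial.eval_pow, Polynomial.eval_X]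
      rw [← hc c]
      exact Finset.sum_congr rfl fun u _ => by ring
    have hP0 : P = 0 := by
      apply Polynomial.eq_zero_of_infinite_isRoot
      apply Set.Infinite.mono (s := Set.range (fun c : ℝ => (c : ℂ)))
      · rintro _ ⟨c, rfl⟩; exact hProots c
      · exact Set.infinite_range_of_injective Complex.ofReal_injective
    have hcoeff : P.coeff t' = a t' := by
      rw [hPdef, Polynomial.finset_sum_coeff]
      rw [Finset.sum_eq_single t']
      · simp
      · intro u _ hu
        rw [Polynomial.coeff_C_mul, Polynomial.coeff_X_pow, if_neg (fun h => hu h.symm), mul_zero]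
      · intro h; exact absurd ht' h
    have : a t' = 0 := by rw [← hcoeff, hP0]; simp
    simpa [ha] using this
  exact sub_eq_zero.mp hz


/-- If `A` is invertible and `AΓA⁻¹ ⊆ Γ`, then
`Q̃_[s,t](AγA⁻¹) = A_[s] Q̃_[s,t](γ) A_[t]⁻¹` for every `γ = (b,l) ∈ Γ`. -/
theorem Qtilde_conj (d s t : ℕ) (ht : t ≤ s)
    (G : Finset (Matrix (Fin d) (Fin d) ℝ)) (Λ : Set (Fin d → ℝ))
    (hcr : IsSplittingCrystal d G Λ)
    (Q : (s : ℕ) → (t : ℕ) → (Fin d → ℝ) → Matrix (Sym (Fin d) s) (Sym (Fin d) t) ℂ)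
    (hQ : IsQfam d Q)
    (A : Matrix (Fin d) (Fin d) ℝ) (hA : IsUnit A.det)
    (hconj : ∀ γ ∈ crystSet G Λ, crystConj A γ ∈ crystSet G Λ)
    (b : Matrix (Fin d) (Fin d) ℝ) (l : Fin d → ℝ)
    (hγ : ((b, l) : CrystElem d) ∈ crystSet G Λ)
    (bm b'm : (u : ℕ) → Matrix (Sym (Fin d) u) (Sym (Fin d) u) ℂ)
    (hbm : ∀ u, IsMonMat d u b (bm u))
    (hb'm : ∀ u, IsMonMat d u (crystConj A (b, l)).1 (b'm u))
    (Am : (u : ℕ) → Matrix (Sym (Fin d) u) (Sym (Fin d) u) ℂ)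
    (hAm : ∀ u, IsMonMat d u A (Am u)) :
    Q s t (crystConj A (b, l)).2 * (b'm t)⁻¹ =
      Am s * (Q s t l * (bm t)⁻¹) * (Am t)⁻¹ := by
  have hb : b ∈ G := hγ.1
  have hborth : b * b.transpose = 1 := hcr.2.2.2.1 b hb
  have hbdet : IsUnit b.det := by
    have h1 : b.det * b.det = 1 := by
      have := congrArg Matrix.det hborth
      rwa [Matrix.det_mul, Matrix.det_transpose, Matrix.det_one] at this
    exact IsUnit.of_mul_eq_one _ h1
  have hl' : (crystConj A (b, l)).2 = A.mulVec l := by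
    show ((A * b * A⁻¹)⁻¹).mulVec ((A * b).mulVec l) = A.mulVec l
    rw [Matrix.mulVec_mulVec]
    congr 1
    have e1 : (A * b * A⁻¹)⁻¹ = A * b⁻¹ * A⁻¹ := by
      rw [Matrix.mul_inv_rev, Matrix.mul_inv_rev, Matrix.nonsing_inv_nonsing_inv A hA,
        Matrix.mul_assoc]
    rw [e1, Matrix.mul_assoc (A * b⁻¹) A⁻¹ (A * b), ← Matrix.mul_assoc A⁻¹ A b,
      Matrix.nonsing_inv_mul A hA, Matrix.one_mul, Matrix.mul_assoc A b⁻¹ b,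
      Matrix.nonsing_inv_mul b hbdet, Matrix.mul_one]
  have hb'A : (A * b * A⁻¹) * A = A * b := by
    rw [Matrix.mul_assoc (A * b) A⁻¹ A, Matrix.nonsing_inv_mul A hA, Matrix.mul_one]
  have hmm1 : IsMonMat d t ((A * b * A⁻¹) * A) (b'm t * Am t) := monmat_mul (hb'm t) (hAm t)
  rw [hb'A] at hmm1
  have hmm2 : IsMonMat d t (A * b) (Am t * bm t) := monmat_mul (hAm t) (hbm t)
  have hcomm : b'm t * Am t = Am t * bm t := monmat_unique hmm1 hmm2
  have hAmU : IsUnit (Am t).det := monmat_isUnit (hAm t) hA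
  have hb'eq : b'm t = Am t * bm t * (Am t)⁻¹ := by
    calc b'm t = b'm t * (Am t * (Am t)⁻¹) := by
          rw [Matrix.mul_nonsing_inv _ hAmU, mul_one]
      _ = (b'm t * Am t) * (Am t)⁻¹ := by rw [mul_assoc]
      _ = Am t * bm t * (Am t)⁻¹ := by rw [hcomm]
  have hb'inv : (b'm t)⁻¹ = Am t * (bm t)⁻¹ * (Am t)⁻¹ := by
    rw [hb'eq, Matrix.mul_inv_rev, Matrix.mul_inv_rev,
      Matrix.nonsing_inv_nonsing_inv _ hAmU, ← mul_assoc]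
  have hQc : Q s t (A.mulVec l) * Am t = Am s * Q s t l :=
    Q_conj d s Q hQ A hA Am hAm l t (Finset.mem_range.mpr (Nat.lt_succ_of_le ht))
  rw [hl', hb'inv, ← Matrix.mul_assoc, ← Matrix.mul_assoc, hQc,
    Matrix.mul_assoc (Am s) (Q s t l) ((bm t)⁻¹)]
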